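/- Let k < 0 be a real number, b = 2 - 1/k, and for x, y ∈ ℝ define the KMNCS kernel K(x, y) = ( ∑_{n=0}^∞ (x y / k²)ⁿ / ((n!)² ((b)_n)²) ) / (N(x) N(y)), where N(x) = ( ∑_{n=0}^∞ (x²/k²)ⁿ / ((n!)² ((b)_n)²) )^{1/2} and (b)_n is the rising Pochhammer symbol. Then K is a symmetric positive semidefinite kernel: K(x, y) = K(y, x), K(x, x) = 1, and for every finite family x_1, …, x_m ∈ ℝ and real coefficients c_1, …, c_m, the Gram sum ∑_{i,j} c_i c_j K(x_i, x_j) ≥ 0. -/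

import Mathlib

/-- The rising Pochhammer symbol `(b)_n = b(b+1)⋯(b+n-1)`. -/
noncomputable def pochhammer' (b : ℝ) (n : ℕ) : ℝ :=
  ∏ i ∈ Finset.range n, (b + i)

/-- The normalization factor `N(x) = ₀F₃(;1, b, b; x²/k²)^{1/2}` with `b = 2 - 1/k`. -/
noncomputable def kmncsNorm (k : ℝ) (x : ℝ) : ℝ :=
  Real.sqrt (∑' n : ℕ,
    (x ^ 2 / k ^ 2) ^ n / ((n.factorial : ℝ) ^ 2 * (pochhammer' (2 - 1 / k) n) ^ 2))

/-- The KMNCS kernel `K(x, y) = ₀F₃(;1, b, b; x y/k²)/(N(x) N(y))`, `b = 2 - 1/k`. -/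
noncomputable def kmncsKernel (k : ℝ) (x y : ℝ) : ℝ :=
  (∑' n : ℕ,
      (x * y / k ^ 2) ^ n / ((n.factorial : ℝ) ^ 2 * (pochhammer' (2 - 1 / k) n) ^ 2)) /
    (kmncsNorm k x * kmncsNorm k y)

private lemma poch_one_le {k : ℝ} (hk : k < 0) (n : ℕ) :
    1 ≤ pochhammer' (2 - 1 / k) n := by
  unfold pochhammer'
  induction n with
  | zero => simp
  | succ n ih =>
    rw [Finset.prod_range_succ]
    have h1 : 1 / k < 0 := div_neg_of_pos_of_neg one_pos hk
    have h2 : (0 : ℝ) ≤ n := Nat.cast_nonneg n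
    nlinarith

private lemma den_pos {k : ℝ} (hk : k < 0) (n : ℕ) :
    0 < (n.factorial : ℝ) ^ 2 * (pochhammer' (2 - 1 / k) n) ^ 2 := by
  have h1 := poch_one_le hk n
  have h2 : (0 : ℝ) < n.factorial := by exact_mod_cast n.factorial_pos
  have h3 : 0 < pochhammer' (2 - 1 / k) n := lt_of_lt_of_le one_pos h1
  positivity

private lemma summable_kmncs {k : ℝ} (hk : k < 0) (z : ℝ) :
    Summable (fun n : ℕ =>
      z ^ n / ((n.factorial : ℝ) ^ 2 * (pochhammer' (2 - 1 / k) n) ^ 2)) := by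
  apply Summable.of_norm_bounded (Real.summable_pow_div_factorial |z|)
  intro n
  have h1 := poch_one_le hk n
  have h2 : (1 : ℝ) ≤ n.factorial := by exact_mod_cast n.factorial_pos
  have hd := den_pos hk n
  rw [Real.norm_eq_abs, abs_div, abs_pow, abs_of_pos hd]
  have hf : (0 : ℝ) < n.factorial := by linarith
  apply div_le_div_of_nonneg_left (by positivity) hf
  have hp2 : 1 ≤ (pochhammer' (2 - 1 / k) n) ^ 2 := by nlinarith
  have hf2 : (n.factorial : ℝ) ≤ (n.factorial : ℝ) ^ 2 := by nlinarith
  nlinarith [mul_le_mul_of_nonneg_left hp2 (by positivity : (0:ℝ) ≤ (n.factorial:ℝ) ^ 2)]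

private lemma one_le_tsum {k : ℝ} (hk : k < 0) {z : ℝ} (hz : 0 ≤ z) :
    1 ≤ ∑' n : ℕ, z ^ n / ((n.factorial : ℝ) ^ 2 * (pochhammer' (2 - 1 / k) n) ^ 2) := by
  have hs := summable_kmncs hk z
  have h0 : z ^ 0 / ((Nat.factorial 0 : ℝ) ^ 2 * (pochhammer' (2 - 1 / k) 0) ^ 2) = 1 := by
    simp [pochhammer']
  calc (1 : ℝ) = z ^ 0 / ((Nat.factorial 0 : ℝ) ^ 2 * (pochhammer' (2 - 1 / k) 0) ^ 2) :=
        h0.symm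
    _ ≤ _ := Summable.le_tsum hs 0 (fun i _ => div_nonneg (pow_nonneg hz i) (den_pos hk i).le)

private lemma norm_pos {k : ℝ} (hk : k < 0) (x : ℝ) : 0 < kmncsNorm k x := by
  have hz : (0 : ℝ) ≤ x ^ 2 / k ^ 2 := by positivity
  have := one_le_tsum hk hz
  exact Real.sqrt_pos.mpr (by linarith)

/-- for `k < 0` the KMNCS kernel is symmetric, takes the value 1 on the
diagonal, and is positive semidefinite: every Gram sum `∑ᵢⱼ cᵢ cⱼ K(xᵢ, xⱼ)` with real
coefficients is nonnegative. -/
theorem kmncsKernel_posSemidef (k : ℝ) (hk : k < 0) :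
    (∀ x y : ℝ, kmncsKernel k x y = kmncsKernel k y x) ∧
      (∀ x : ℝ, kmncsKernel k x x = 1) ∧
      ∀ (m : ℕ) (x : Fin m → ℝ) (c : Fin m → ℝ),
        0 ≤ ∑ i : Fin m, ∑ j : Fin m, c i * c j * kmncsKernel k (x i) (x j) := by
  refine ⟨?_, ?_, ?_⟩
  · intro x y
    unfold kmncsKernel
    rw [mul_comm x y, mul_comm (kmncsNorm k x)]
  · intro x
    unfold kmncsKernel
    have h1 : x * x = x ^ 2 := (sq x).symm
    rw [h1]
    have hz : (0 : ℝ) ≤ x ^ 2 / k ^ 2 := by positivity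
    have hge := one_le_tsum hk hz
    have hN : kmncsNorm k x * kmncsNorm k x
        = ∑' n : ℕ, (x ^ 2 / k ^ 2) ^ n /
            ((n.factorial : ℝ) ^ 2 * (pochhammer' (2 - 1 / k) n) ^ 2) :=
      Real.mul_self_sqrt (by linarith)
    rw [hN, div_self (by linarith)]
  · intro m x c
    set D : ℕ → ℝ := fun n => (n.factorial : ℝ) ^ 2 * (pochhammer' (2 - 1 / k) n) ^ 2 with hD
    set a : ℕ → ℝ := fun n => (1 / k ^ 2) ^ n / D n with ha
    set d : Fin m → ℝ := fun i => c i / kmncsNorm k (x i) with hd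
    have hterm : ∀ i j : Fin m, c i * c j * kmncsKernel k (x i) (x j)
        = ∑' n : ℕ, (d i * (x i) ^ n) * (d j * (x j) ^ n) * a n := by
      intro i j
      have hNi := norm_pos hk (x i)
      have hNj := norm_pos hk (x j)
      have e1 : c i * c j * kmncsKernel k (x i) (x j)
          = d i * d j * ∑' n : ℕ, (x i * x j / k ^ 2) ^ n / D n := by
        unfold kmncsKernel
        simp only [hd]
        field_simp
        rfl
      rw [e1, ← tsum_mul_left]
      congr 1
      ext n
      have e2 : (x i * x j / k ^ 2) ^ n = (x i) ^ n * (x j) ^ n * (1 / k ^ 2) ^ n := by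
        rw [show x i * x j / k ^ 2 = x i * (x j * (1 / k ^ 2)) by ring, mul_pow, mul_pow]
        ring
      rw [e2]
      simp only [ha]
      ring
    have hsum : ∀ i j : Fin m,
        Summable (fun n : ℕ => (d i * (x i) ^ n) * (d j * (x j) ^ n) * a n) := by
      intro i j
      apply ((summable_kmncs hk (x i * x j / k ^ 2)).mul_left (d i * d j)).congr
      intro n
      have e2 : (x i * x j / k ^ 2) ^ n = (x i) ^ n * (x j) ^ n * (1 / k ^ 2) ^ n := by
        rw [show x i * x j / k ^ 2 = x i * (x j * (1 / k ^ 2)) by ring, mul_pow, mul_pow]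
        ring
      rw [e2]
      simp only [ha, hD]
      ring
    calc (0 : ℝ)
        ≤ ∑' n : ℕ, ∑ i : Fin m, ∑ j : Fin m,
            (d i * (x i) ^ n) * (d j * (x j) ^ n) * a n := by
          apply tsum_nonneg
          intro n
          have han : 0 ≤ a n := by
            have := den_pos hk n
            simp only [ha, hD]
            positivity
          have e3 : ∑ i : Fin m, ∑ j : Fin m, (d i * (x i) ^ n) * (d j * (x j) ^ n) * a n
              = ((∑ i : Fin m, d i * (x i) ^ n) * (∑ j : Fin m, d j * (x j) ^ n)) * a n := by
            rw [Finset.sum_mul_sum, Finset.sum_mul]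
            apply Finset.sum_congr rfl
            intro i _
            rw [Finset.sum_mul]
          rw [e3]
          exact mul_nonneg (mul_self_nonneg _) han
      _ = ∑ i : Fin m, ∑' n : ℕ, ∑ j : Fin m,
            (d i * (x i) ^ n) * (d j * (x j) ^ n) * a n := by
          exact Summable.tsum_finsetSum (fun i _ => summable_sum (fun j _ => hsum i j))
      _ = ∑ i : Fin m, ∑ j : Fin m, ∑' n : ℕ,
            (d i * (x i) ^ n) * (d j * (x j) ^ n) * a n := by
          exact Finset.sum_congr rfl fun i _ => Summable.tsum_finsetSum (fun j _ => hsum i j)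
      _ = ∑ i : Fin m, ∑ j : Fin m, c i * c j * kmncsKernel k (x i) (x j) := by
          exact Finset.sum_congr rfl fun i _ =>
            Finset.sum_congr rfl fun j _ => (hterm i j).symm
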